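/- For any points x, y, z in ℝ² forming a triangle, the three closed disks D(x,y), D(y,z), D(x,z) with diameters the sides of the triangle have a common point. (In particular, the foot of the altitude from the vertex with the largest angle lies in all three disks.) -/

import Mathlib

open Real EuclideanGeometry RealInnerProductSpace

/-- The closed disk with diameter segment `ab`. -/
def diskD (a b : EuclideanSpace ℝ (Fin 2)) : Set (EuclideanSpace ℝ (Fin 2)) :=
  Metric.closedBall (midpoint ℝ a b) (dist a b / 2)

lemma mem_diskD_iff (a b q : EuclideanSpace ℝ (Fin 2)) :
    q ∈ diskD a b ↔ ⟪q - a, q - b⟫ ≤ 0 := by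
  have hinv : (⅟2 : ℝ) = (2:ℝ)⁻¹ := invOf_eq_inv 2
  have hm : q - midpoint ℝ a b = (2:ℝ)⁻¹ • ((q - a) + (q - b)) := by
    rw [midpoint_eq_smul_add, hinv]; module
  have hd : dist q (midpoint ℝ a b) = ‖(q - a) + (q - b)‖ / 2 := by
    rw [dist_eq_norm, hm, norm_smul]
    norm_num
    ring
  have hab : dist a b = ‖(q - a) - (q - b)‖ := by
    rw [dist_eq_norm']; congr 1; abel
  rw [diskD, Metric.mem_closedBall, hd, hab]
  have key2 : ‖(q - a) + (q - b)‖ ^ 2 - ‖(q - a) - (q - b)‖ ^ 2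
      = 4 * ⟪q - a, q - b⟫ := by
    rw [norm_add_sq_real ((q - a)) ((q - b)),
      norm_sub_sq_real ((q - a)) ((q - b))]
    ring
  constructor
  · intro h2
    have h2' : ‖(q - a) + (q - b)‖ ≤ ‖(q - a) - (q - b)‖ := by linarith
    have h3 : ‖(q - a) + (q - b)‖ ^ 2 ≤ ‖(q - a) - (q - b)‖ ^ 2 :=
      pow_le_pow_left₀ (norm_nonneg _) h2' 2
    linarith
  · intro hq
    have h3 : ‖(q - a) + (q - b)‖ ^ 2 ≤ ‖(q - a) - (q - b)‖ ^ 2 := by linarith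
    have h4 : ‖(q - a) + (q - b)‖ ≤ ‖(q - a) - (q - b)‖ := by
      nlinarith [norm_nonneg ((q - a) + (q - b)), norm_nonneg ((q - a) - (q - b))]
    linarith

lemma key (a b c : EuclideanSpace ℝ (Fin 2)) (hab : a ≠ b)
    (h1 : 0 ≤ ⟪c - a, b - a⟫) (h2 : 0 ≤ ⟪c - b, a - b⟫) :
    ∃ q, ⟪q - a, q - b⟫ ≤ 0 ∧ ⟪q - a, q - c⟫ ≤ 0 ∧ ⟪q - b, q - c⟫ ≤ 0 := by
  have hn : (0:ℝ) < ‖b - a‖ ^ 2 := by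
    have h : b - a ≠ 0 := sub_ne_zero.mpr (Ne.symm hab)
    have := norm_pos_iff.mpr h
    positivity
  set t : ℝ := ⟪c - a, b - a⟫ / ‖b - a‖ ^ 2 with ht
  set q : EuclideanSpace ℝ (Fin 2) := a + t • (b - a) with hqdef
  have hqa : q - a = t • (b - a) := by rw [hqdef]; abel
  have hqb : q - b = (t - 1) • (b - a) := by rw [hqdef]; module
  have hqc : ⟪q - c, b - a⟫ = 0 := by
    have e : q - c = t • (b - a) - (c - a) := by rw [hqdef]; abel
    rw [e, inner_sub_left, real_inner_smul_left, real_inner_self_eq_norm_sq]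
    field_simp [ht]
    rw [ht, div_mul_cancel₀ _ hn.ne', sub_self]
  have ht0 : 0 ≤ t := div_nonneg h1 (le_of_lt hn)
  have ht1 : t ≤ 1 := by
    rw [ht, div_le_one hn]
    have e : ⟪c - b, a - b⟫ = ‖b - a‖ ^ 2 - ⟪c - a, b - a⟫ := by
      rw [← real_inner_self_eq_norm_sq]
      have e1 : c - b = (c - a) - (b - a) := by abel
      have e2 : a - b = -(b - a) := by abel
      rw [e1, e2, inner_neg_right, inner_sub_left]
      ring
    linarith
  refine ⟨q, ?_, ?_, ?_⟩
  · rw [hqa, hqb, real_inner_smul_left, real_inner_smul_right,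
      real_inner_self_eq_norm_sq]
    nlinarith [mul_nonneg (mul_nonneg ht0 (sub_nonneg.mpr ht1)) hn.le]
  · rw [real_inner_comm, hqa, real_inner_smul_right, hqc]
    simp
  · rw [real_inner_comm, hqb, real_inner_smul_right, hqc]
    simp

theorem triangle_side_disks_intersect
    (x y z : EuclideanSpace ℝ (Fin 2)) (h : AffineIndependent ℝ ![x, y, z]) :
    ∃ q, q ∈ diskD x y ∧ q ∈ diskD y z ∧ q ∈ diskD x z := by
  have hinj := h.injective
  have hxy : x ≠ y := fun e => by
    have : (0 : Fin 3) = 1 := hinj (by simpa using e)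
    simp at this
  have hyz : y ≠ z := fun e => by
    have : (1 : Fin 3) = 2 := hinj (by simpa using e)
    simp at this
  have hxz : x ≠ z := fun e => by
    have : (0 : Fin 3) = 2 := hinj (by simpa using e)
    simp at this
  simp only [mem_diskD_iff]
  have expand : ∀ a b c : EuclideanSpace ℝ (Fin 2),
      ⟪a - b, c - b⟫ = ⟪a, c⟫ - ⟪a, b⟫ - ⟪b, c⟫ + ⟪b, b⟫ := by
    intro a b c
    rw [inner_sub_left, inner_sub_right, inner_sub_right, real_inner_comm b a]
    ring
  have c1 : ⟪x, y⟫ = ⟪y, x⟫ := real_inner_comm y x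
  have c2 : ⟪x, z⟫ = ⟪z, x⟫ := real_inner_comm z x
  have c3 : ⟪y, z⟫ = ⟪z, y⟫ := real_inner_comm z y
  have hpq : ⟪y - x, z - x⟫ + ⟪x - y, z - y⟫ = ⟪y - x, y - x⟫ := by
    simp only [expand]; linarith
  have hpr : ⟪y - x, z - x⟫ + ⟪x - z, y - z⟫ = ⟪z - x, z - x⟫ := by
    simp only [expand]; linarith
  have hqr : ⟪x - y, z - y⟫ + ⟪x - z, y - z⟫ = ⟪z - y, z - y⟫ := by
    simp only [expand]; linarith
  have hyx0 : (0:ℝ) < ⟪y - x, y - x⟫ := by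
    rw [real_inner_self_eq_norm_sq]
    have := norm_pos_iff.mpr (sub_ne_zero.mpr hxy.symm)
    positivity
  have hzx0 : (0:ℝ) < ⟪z - x, z - x⟫ := by
    rw [real_inner_self_eq_norm_sq]
    have := norm_pos_iff.mpr (sub_ne_zero.mpr hxz.symm)
    positivity
  have hzy0 : (0:ℝ) < ⟪z - y, z - y⟫ := by
    rw [real_inner_self_eq_norm_sq]
    have := norm_pos_iff.mpr (sub_ne_zero.mpr hyz.symm)
    positivity
  by_cases hp : 0 ≤ ⟪y - x, z - x⟫
  · by_cases hq : 0 ≤ ⟪x - y, z - y⟫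
    · obtain ⟨q, h1, h2, h3⟩ := key x y z hxy
        (by rwa [real_inner_comm]) (by rwa [real_inner_comm])
      exact ⟨q, h1, h3, h2⟩
    · push_neg at hq
      have hr : 0 ≤ ⟪x - z, y - z⟫ := by linarith
      obtain ⟨q, h1, h2, h3⟩ := key x z y hxz hp (by rwa [real_inner_comm])
      exact ⟨q, h2, by rwa [real_inner_comm] at h3, h1⟩
  · push_neg at hp
    have hq : 0 ≤ ⟪x - y, z - y⟫ := by linarith
    have hr : 0 ≤ ⟪x - z, y - z⟫ := by linarith
    obtain ⟨q, h1, h2, h3⟩ := key y z x hyz hq hr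
    exact ⟨q, by rwa [real_inner_comm] at h2, h1, by rwa [real_inner_comm] at h3⟩
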